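/- arXiv:2411.11333 — 2 statements merged into one kernel-verified Lean document; each statement's English description precedes it below -/
import Mathlib

section
/- Let n ≥ 1, b ∈ ℝ with b ≥ 2 - 2n, and let u : ℝⁿ → ℂ be a radial function in the weighted Sobolev space W_b^{1,2} (i.e. u ∈ L² and |x|^{b/2}∇u ∈ L²). Then there exists a constant C depending only on n such that sup_{x ∈ ℝⁿ} |x|^{(2n-2+b)/4} |u(x)| ≤ C ‖∇u‖_{L²(|x|^b dx)}^{1/2} ‖u‖_{L²}^{1/2}. -/
open MeasureTheory Real

noncomputable section

section StraussAux

open Set Function Metric MeasureTheory Measure ENNReal Real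
open scoped NNReal

open Set Function Metric MeasureTheory Measure ENNReal
open scoped NNReal

local notation "dim" => Module.finrank ℝ

variable {E : Type*} [NormedAddCommGroup E] [NormedSpace ℝ E] [MeasurableSpace E]
  [BorelSpace E] [Nontrivial E] (μ : Measure E) [FiniteDimensional ℝ E] [μ.IsAddHaarMeasure]

lemma lintegral_fun_norm_addHaar' (F : ℝ → ℝ≥0∞) (hF : Measurable F) :
    ∫⁻ x, F ‖x‖ ∂μ = (dim E) * μ (ball 0 1) *
      ∫⁻ y in Ioi (0 : ℝ), ENNReal.ofReal (y ^ (dim E - 1)) * F y := by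
  calc
    ∫⁻ x, F ‖x‖ ∂μ = ∫⁻ x : ({(0)}ᶜ : Set E), F (‖x.1‖) ∂(μ.comap (↑)) := by
      rw [lintegral_subtype_comap (measurableSet_singleton (0:E)).compl (fun x => F ‖x‖),
        restrict_compl_singleton]
    _ = ∫⁻ p : sphere (0 : E) 1 × Ioi (0 : ℝ), F p.2
        ∂(μ.toSphere.prod (volumeIoiPow (dim E - 1))) := by
      refine Eq.trans ?_ (μ.measurePreserving_homeomorphUnitSphereProd.lintegral_comp
        ((hF.comp measurable_subtype_coe).comp measurable_snd))
      congr 1; funext x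
      simp [homeomorphUnitSphereProd, homeomorphSphereProd]
    _ = μ.toSphere univ * ∫⁻ r : Ioi (0 : ℝ), F r ∂(volumeIoiPow (dim E - 1)) := by
      rw [lintegral_prod (fun p : sphere (0:E) 1 × Ioi (0:ℝ) => F ↑p.2)
        ((hF.comp (measurable_subtype_coe.comp measurable_snd)).aemeasurable)]
      simp [lintegral_const, mul_comm]
    _ = _ := by
      rw [μ.toSphere_apply_univ]
      congr 1
      rw [Measure.volumeIoiPow, lintegral_withDensity_eq_lintegral_mul _
        ((measurable_subtype_coe.pow_const _).ennreal_ofReal)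
        (show Measurable (fun r : Ioi (0:ℝ) => F ↑r) from hF.comp measurable_subtype_coe),
        ← lintegral_subtype_comap measurableSet_Ioi
          (fun y => ENNReal.ofReal (y ^ (dim E - 1)) * F y)]
      rfl

variable {G : Type*} [NormedAddCommGroup G] [InnerProductSpace ℝ G] [FiniteDimensional ℝ G]

lemma radial_fderiv_norm {u : G → ℂ} (hu : Differentiable ℝ u)
    (hrad : ∀ x y : G, ‖x‖ = ‖y‖ → u x = u y) :
    ∀ x y : G, ‖x‖ = ‖y‖ → ‖fderiv ℝ u x‖ = ‖fderiv ℝ u y‖ := by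
  intro x y h
  set R : G ≃ₗᵢ[ℝ] G := Submodule.reflection (ℝ ∙ (x - y))ᗮ with hRdef
  have hRx : R x = y := Submodule.reflection_sub h
  set L : G →L[ℝ] G := R.toLinearIsometry.toContinuousLinearMap with hLdef
  have hLco : (L : G → G) = R := by
    ext z; rfl
  have hcomp : (u ∘ L) = u := by
    funext z
    exact hrad _ _ (by show ‖L z‖ = ‖z‖; rw [hLco]; exact R.norm_map z)
  have hfd : fderiv ℝ (u ∘ L) x = (fderiv ℝ u (L x)).comp L := by
    rw [fderiv_comp x (hu _) (L.differentiableAt), L.fderiv]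
  have hLx : L x = y := by rw [hLco]; exact hRx
  calc ‖fderiv ℝ u x‖ = ‖fderiv ℝ (u ∘ L) x‖ := by rw [hcomp]
    _ = ‖(fderiv ℝ u y).comp L‖ := by rw [hfd, hLx]
    _ = ‖fderiv ℝ u y‖ :=
      ContinuousLinearMap.opNorm_comp_linearIsometryEquiv (fderiv ℝ u y) R


lemma strauss_core {f f' : ℝ → ℂ} {g : ℝ → ℝ} {α c c' : ℝ} {L1 L2 : ℝ≥0∞}
    (hα : 0 ≤ α) (hc' : 0 ≤ c') (hcc' : c + c' = 2 * α)
    (hf : ∀ t, HasDerivAt f (f' t) t) (hf'm : Measurable f')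
    (hg0 : ∀ t, 0 ≤ g t) (hgm : Measurable g)
    (hbound : ∀ t, ‖f' t‖ ≤ g t)
    (hL1 : (∫⁻ t in Set.Ioi (0:ℝ), ENNReal.ofReal (t ^ c * g t ^ 2)) = L1)
    (hL1f : L1 ≠ ⊤)
    (hL2 : (∫⁻ t in Set.Ioi (0:ℝ), ENNReal.ofReal (t ^ c' * ‖f t‖ ^ 2)) = L2)
    (hL2f : L2 ≠ ⊤) :
    ∀ r : ℝ, 0 < r → r ^ α * ‖f r‖ ^ 2 ≤ 2 * (L1 ^ ((1:ℝ)/2) * L2 ^ ((1:ℝ)/2)).toReal := by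
  have hfc : Continuous f := by
    rw [continuous_iff_continuousAt]; exact fun t => (hf t).continuousAt
  have hfm : Measurable f := hfc.measurable
  -- the middle integral
  set I : ℝ≥0∞ := ∫⁻ t in Set.Ioi (0:ℝ), ENNReal.ofReal (t ^ α * (‖f t‖ * g t)) with hIdef
  -- Cauchy-Schwarz
  have hCS : I ≤ L1 ^ ((1:ℝ)/2) * L2 ^ ((1:ℝ)/2) := by
    have h1 : I = ∫⁻ t in Set.Ioi (0:ℝ),
        ((fun t => ENNReal.ofReal (t ^ (c/2) * g t)) * (fun t => ENNReal.ofReal (t ^ (c'/2) * ‖f t‖))) t := by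
      rw [hIdef]
      refine setLIntegral_congr_fun measurableSet_Ioi ?_
      intro t ht
      have ht0 : (0:ℝ) < t := ht
      simp only [Pi.mul_apply]
      rw [← ENNReal.ofReal_mul (mul_nonneg (Real.rpow_nonneg ht0.le _) (hg0 t))]
      congr 1
      have : t ^ (c/2) * t ^ (c'/2) = t ^ α := by
        rw [← Real.rpow_add ht0]
        congr 1
        linarith
      calc t ^ α * (‖f t‖ * g t) = (t ^ (c/2) * t ^ (c'/2)) * (‖f t‖ * g t) := by rw [this]
        _ = t ^ (c/2) * g t * (t ^ (c'/2) * ‖f t‖) := by ring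
    have h2 : ∫⁻ t in Set.Ioi (0:ℝ), (fun t => ENNReal.ofReal (t ^ (c/2) * g t)) t ^ (2:ℝ)
        = L1 := by
      rw [← hL1]
      refine setLIntegral_congr_fun measurableSet_Ioi ?_
      intro t ht
      have ht0 : (0:ℝ) < t := ht
      beta_reduce
      rw [ENNReal.ofReal_rpow_of_nonneg (mul_nonneg (Real.rpow_nonneg ht0.le _) (hg0 t))
        (by norm_num)]
      congr 1
      rw [show ((2:ℝ)) = ((2:ℕ):ℝ) by norm_num, Real.rpow_natCast, mul_pow]
      congr 1
      rw [sq, ← Real.rpow_add ht0]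
      congr 1
      push_cast
      ring
    have h3 : ∫⁻ t in Set.Ioi (0:ℝ), (fun t => ENNReal.ofReal (t ^ (c'/2) * ‖f t‖)) t ^ (2:ℝ)
        = L2 := by
      rw [← hL2]
      refine setLIntegral_congr_fun measurableSet_Ioi ?_
      intro t ht
      have ht0 : (0:ℝ) < t := ht
      beta_reduce
      rw [ENNReal.ofReal_rpow_of_nonneg (mul_nonneg (Real.rpow_nonneg ht0.le _) (norm_nonneg _))
        (by norm_num)]
      congr 1
      rw [show ((2:ℝ)) = ((2:ℕ):ℝ) by norm_num, Real.rpow_natCast, mul_pow]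
      congr 1
      rw [sq, ← Real.rpow_add ht0]
      congr 1
      push_cast
      ring
    rw [h1, ← h2, ← h3]
    exact ENNReal.lintegral_mul_le_Lp_mul_Lq _ (by constructor <;> norm_num)
      ((((by measurability : Measurable (fun t : ℝ => t ^ (c/2))).mul hgm).ennreal_ofReal).aemeasurable)
      ((((by measurability : Measurable (fun t : ℝ => t ^ (c'/2))).mul hfm.norm).ennreal_ofReal).aemeasurable)
  have hIf : I ≠ ⊤ := by
    refine ne_top_of_le_ne_top ?_ hCS
    exact ENNReal.mul_ne_top (ENNReal.rpow_ne_top_of_nonneg (by norm_num) hL1f)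
      (ENNReal.rpow_ne_top_of_nonneg (by norm_num) hL2f)
  intro r hr
  have step2 : 2 * I.toReal ≤ 2 * (L1 ^ ((1:ℝ)/2) * L2 ^ ((1:ℝ)/2)).toReal := by
    have := ENNReal.toReal_mono (ENNReal.mul_ne_top
      (ENNReal.rpow_ne_top_of_nonneg (by norm_num) hL1f)
      (ENNReal.rpow_ne_top_of_nonneg (by norm_num) hL2f)) hCS
    linarith
  refine le_trans ?_ step2
  refine le_of_forall_pos_le_add ?_
  intro ε hε
  have hrα : (0:ℝ) < r ^ α := Real.rpow_pos_of_pos hr α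
  -- find s with small ‖f s‖²
  obtain ⟨s, hsm, hs⟩ : ∃ s, max r 1 ≤ s ∧ ‖f s‖ ^ 2 < ε / r ^ α := by
    by_contra hcon
    push_neg at hcon
    refine hL2f (top_le_iff.mp ?_)
    rw [← hL2]
    have hm1 : (1:ℝ) ≤ max r 1 := le_max_right _ _
    calc (⊤:ℝ≥0∞) = ENNReal.ofReal (ε / r ^ α) * volume (Ioi (max r 1)) := by
          rw [Real.volume_Ioi, ENNReal.mul_top (by simp [ENNReal.ofReal_eq_zero, not_le]; positivity)]
      _ = ∫⁻ _ in Ioi (max r 1), ENNReal.ofReal (ε / r ^ α) := by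
          rw [setLIntegral_const]
      _ ≤ ∫⁻ t in Ioi (max r 1), ENNReal.ofReal (t ^ c' * ‖f t‖ ^ 2) := by
          refine lintegral_mono_ae ?_
          filter_upwards [ae_restrict_mem measurableSet_Ioi] with t ht
          apply ENNReal.ofReal_le_ofReal
          have ht1 : (1:ℝ) ≤ t := hm1.trans (le_of_lt ht)
          have h1 : (1:ℝ) ≤ t ^ c' := by
            calc (1:ℝ) = 1 ^ c' := (Real.one_rpow _).symm
              _ ≤ t ^ c' := Real.rpow_le_rpow (by norm_num) ht1 hc'
          calc ε / r ^ α ≤ ‖f t‖ ^ 2 := hcon t (le_of_lt ht)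
            _ = 1 * ‖f t‖ ^ 2 := (one_mul _).symm
            _ ≤ t ^ c' * ‖f t‖ ^ 2 := by
                exact mul_le_mul_of_nonneg_right h1 (sq_nonneg _)
      _ ≤ ∫⁻ t in Ioi 0, ENNReal.ofReal (t ^ c' * ‖f t‖ ^ 2) :=
          lintegral_mono_set (Ioi_subset_Ioi (by positivity))
  have hrs : r ≤ s := (le_max_left r 1).trans hsm
  have hs0 : 0 < s := hr.trans_le hrs
  -- derivative of ψ = ‖f‖²
  set ψ : ℝ → ℝ := fun t => ‖f t‖ ^ 2 with hψdef
  set ψ' : ℝ → ℝ := fun t => (inner ℝ (f t) (f' t) : ℝ) + (inner ℝ (f' t) (f t) : ℝ) with hψ'def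
  have hψd : ∀ t, HasDerivAt ψ (ψ' t) t := by
    intro t
    have h := (hf t).inner ℝ (hf t)
    have hfun : (fun t => (inner ℝ (f t) (f t) : ℝ)) = ψ :=
      funext fun t => real_inner_self_eq_norm_sq (f t)
    rw [hfun] at h
    exact h
  have hψ'le : ∀ t, |ψ' t| ≤ 2 * ‖f t‖ * g t := by
    intro t
    calc |ψ' t| ≤ |(inner ℝ (f t) (f' t) : ℝ)| + |(inner ℝ (f' t) (f t) : ℝ)| := abs_add_le _ _
      _ ≤ ‖f t‖ * ‖f' t‖ + ‖f' t‖ * ‖f t‖ :=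
          add_le_add (abs_real_inner_le_norm _ _) (abs_real_inner_le_norm _ _)
      _ ≤ 2 * ‖f t‖ * g t := by
          nlinarith [hbound t, norm_nonneg (f t), norm_nonneg (f' t), hg0 t]
  have hψ'm : Measurable ψ' := by
    apply Measurable.add
    · exact (hfm.inner hf'm)
    · exact (hf'm.inner hfm)
  -- bound for ‖f‖ on Icc r s
  obtain ⟨M, hM⟩ := (isCompact_Icc (a := r) (b := s)).exists_bound_of_continuousOn
    hfc.continuousOn
  have hM0 : (0:ℝ) ≤ M := le_trans (norm_nonneg (f r)) (hM r (left_mem_Icc.mpr hrs))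
  -- g integrable on Ioc r s
  have hgint : IntegrableOn g (Ioc r s) := by
    set m₀ := min (r ^ c) (s ^ c) with hm₀
    have hm₀p : 0 < m₀ := lt_min (Real.rpow_pos_of_pos hr _) (Real.rpow_pos_of_pos hs0 _)
    have hle : ∀ t ∈ Ioc r s, m₀ ≤ t ^ c := by
      intro t ht
      rcases le_or_gt 0 c with hc | hc
      · exact le_trans (min_le_left _ _) (Real.rpow_le_rpow hr.le ht.1.le hc)
      · exact le_trans (min_le_right _ _)
          (Real.rpow_le_rpow_of_nonpos (hr.trans ht.1) ht.2 hc.le)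
    have hfin1 : ∫⁻ t in Ioc r s, ENNReal.ofReal (g t ^ 2) < ⊤ := by
      calc ∫⁻ t in Ioc r s, ENNReal.ofReal (g t ^ 2)
          ≤ ∫⁻ t in Ioc r s, ENNReal.ofReal (m₀⁻¹) * ENNReal.ofReal (t ^ c * g t ^ 2) := by
            refine lintegral_mono_ae ?_
            filter_upwards [ae_restrict_mem measurableSet_Ioc] with t ht
            rw [← ENNReal.ofReal_mul (inv_nonneg.mpr hm₀p.le)]
            apply ENNReal.ofReal_le_ofReal
            have h1 := hle t ht
            calc g t ^ 2 = m₀⁻¹ * (m₀ * g t ^ 2) := by field_simp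
              _ ≤ m₀⁻¹ * (t ^ c * g t ^ 2) := by
                  refine mul_le_mul_of_nonneg_left ?_ (inv_nonneg.mpr hm₀p.le)
                  exact mul_le_mul_of_nonneg_right h1 (sq_nonneg _)
        _ = ENNReal.ofReal (m₀⁻¹) * ∫⁻ t in Ioc r s, ENNReal.ofReal (t ^ c * g t ^ 2) :=
            lintegral_const_mul' _ _ ENNReal.ofReal_ne_top
        _ ≤ ENNReal.ofReal (m₀⁻¹) * L1 := by
            refine mul_le_mul_of_nonneg_left ?_ zero_le
            rw [← hL1]
            refine lintegral_mono_set ?_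
            exact fun t ht => hr.trans ht.1
        _ < ⊤ := ENNReal.mul_lt_top (lt_top_iff_ne_top.mpr ENNReal.ofReal_ne_top)
            (lt_top_iff_ne_top.mpr hL1f)
    refine ⟨hgm.aestronglyMeasurable, ?_⟩
    rw [hasFiniteIntegral_iff_ofReal (Filter.Eventually.of_forall hg0)]
    calc ∫⁻ t in Ioc r s, ENNReal.ofReal (g t)
        ≤ ∫⁻ t in Ioc r s, ENNReal.ofReal (g t ^ 2 + 1) := by
          refine lintegral_mono fun t => ENNReal.ofReal_le_ofReal ?_
          nlinarith [sq_nonneg (g t - 1)]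
      _ = ∫⁻ t in Ioc r s, (ENNReal.ofReal (g t ^ 2) + 1) := by
          congr 1
          funext t
          rw [ENNReal.ofReal_add (sq_nonneg _) zero_le_one, ENNReal.ofReal_one]
      _ = (∫⁻ t in Ioc r s, ENNReal.ofReal (g t ^ 2)) + volume (Ioc r s) := by
          rw [lintegral_add_right _ measurable_const, setLIntegral_const, one_mul]
      _ < ⊤ := ENNReal.add_lt_top.mpr ⟨hfin1, measure_Ioc_lt_top⟩
  -- interval integrability of ψ'
  have hψ'int : IntervalIntegrable ψ' volume r s := by
    rw [intervalIntegrable_iff_integrableOn_Ioc_of_le hrs]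
    refine Integrable.mono' (hgint.const_mul (2 * M)) hψ'm.aestronglyMeasurable ?_
    filter_upwards [ae_restrict_mem measurableSet_Ioc] with t ht
    rw [Real.norm_eq_abs]
    calc |ψ' t| ≤ 2 * ‖f t‖ * g t := hψ'le t
      _ ≤ 2 * M * g t := by
        refine mul_le_mul_of_nonneg_right ?_ (hg0 t)
        have := hM t (Ioc_subset_Icc_self ht)
        linarith
  -- the majorant
  set h : ℝ → ℝ := fun t => 2 * (t ^ α * (‖f t‖ * g t)) with hhdef
  have hhm : Measurable h := by
    apply Measurable.const_mul
    exact ((by measurability : Measurable fun t : ℝ => t ^ α).mul (hfm.norm.mul hgm))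
  have hhint : IntegrableOn h (Ioc r s) := by
    refine Integrable.mono' (hgint.const_mul (2 * s ^ α * M)) hhm.aestronglyMeasurable ?_
    filter_upwards [ae_restrict_mem measurableSet_Ioc] with t ht
    have ht0 : (0:ℝ) < t := hr.trans ht.1
    have htα : t ^ α ≤ s ^ α := Real.rpow_le_rpow ht0.le ht.2 hα
    have htα0 : (0:ℝ) ≤ t ^ α := Real.rpow_nonneg ht0.le _
    have hMt : ‖f t‖ ≤ M := hM t (Ioc_subset_Icc_self ht)
    have hsα0 : (0:ℝ) ≤ s ^ α := Real.rpow_nonneg hs0.le _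
    have hht : h t = 2 * (t ^ α * (‖f t‖ * g t)) := rfl
    rw [Real.norm_eq_abs, hht, abs_of_nonneg (mul_nonneg (by norm_num)
      (mul_nonneg htα0 (mul_nonneg (norm_nonneg _) (hg0 t))))]
    have hmm : t ^ α * ‖f t‖ ≤ s ^ α * M := mul_le_mul htα hMt (norm_nonneg _) hsα0
    have hmm2 := mul_le_mul_of_nonneg_right hmm (hg0 t)
    calc 2 * (t ^ α * (‖f t‖ * g t)) = 2 * ((t ^ α * ‖f t‖) * g t) := by ring
      _ ≤ 2 * ((s ^ α * M) * g t) := by linarith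
      _ = 2 * s ^ α * M * g t := by ring
  -- FTC
  have hFTC : ∫ t in r..s, ψ' t = ψ s - ψ r :=
    intervalIntegral.integral_eq_sub_of_hasDerivAt (fun t _ => hψd t) hψ'int
  have key : r ^ α * ψ r ≤ r ^ α * ψ s + ∫ t in r..s, h t := by
    have h1 : r ^ α * ψ r = r ^ α * ψ s - r ^ α * ∫ t in r..s, ψ' t := by
      rw [hFTC]; ring
    have h2 : - (r ^ α * ∫ t in r..s, ψ' t) ≤ ∫ t in r..s, h t := by
      rw [← intervalIntegral.integral_const_mul, ← intervalIntegral.integral_neg]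
      refine intervalIntegral.integral_mono_on hrs ((hψ'int.const_mul _).neg)
        ((intervalIntegrable_iff_integrableOn_Ioc_of_le hrs).mpr hhint) ?_
      intro t ht
      have ht0 : (0:ℝ) ≤ t := hr.le.trans ht.1
      have hrt : r ^ α ≤ t ^ α := Real.rpow_le_rpow hr.le ht.1 hα
      have hb : |r ^ α * ψ' t| ≤ t ^ α * (2 * ‖f t‖ * g t) := by
        rw [abs_mul, abs_of_nonneg hrα.le]
        refine mul_le_mul hrt (hψ'le t) (abs_nonneg _) (Real.rpow_nonneg ht0 _)
      calc -(r ^ α * ψ' t) ≤ |r ^ α * ψ' t| := neg_le_abs _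
        _ ≤ t ^ α * (2 * ‖f t‖ * g t) := hb
        _ = h t := by rw [hhdef]; ring
    linarith
  -- interval integral of h bounded by 2 I.toReal
  have hIbound : ∫ t in r..s, h t ≤ 2 * I.toReal := by
    rw [intervalIntegral.integral_of_le hrs]
    have heq : ∫ t in Ioc r s, h t = (∫⁻ t in Ioc r s, ENNReal.ofReal (h t)).toReal := by
      rw [integral_eq_lintegral_of_nonneg_ae ?_ (hhm.aestronglyMeasurable)]
      filter_upwards [ae_restrict_mem measurableSet_Ioc] with t ht
      have ht0 : (0:ℝ) < t := hr.trans ht.1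
      have htα0 : (0:ℝ) ≤ t ^ α := Real.rpow_nonneg ht0.le _
      show (0:ℝ) ≤ 2 * (t ^ α * (‖f t‖ * g t))
      exact mul_nonneg (by norm_num)
        (mul_nonneg htα0 (mul_nonneg (norm_nonneg _) (hg0 t)))
    rw [heq]
    have hle2 : ∫⁻ t in Ioc r s, ENNReal.ofReal (h t) ≤ 2 * I := by
      calc ∫⁻ t in Ioc r s, ENNReal.ofReal (h t)
          = ∫⁻ t in Ioc r s, 2 * ENNReal.ofReal (t ^ α * (‖f t‖ * g t)) := by
            congr 1
            funext t
            rw [hhdef, ENNReal.ofReal_mul (by norm_num)]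
            norm_num
        _ = 2 * ∫⁻ t in Ioc r s, ENNReal.ofReal (t ^ α * (‖f t‖ * g t)) :=
            lintegral_const_mul' _ _ (by norm_num)
        _ ≤ 2 * I := by
            refine mul_le_mul_of_nonneg_left (lintegral_mono_set fun t ht => hr.trans ht.1) zero_le
    calc (∫⁻ t in Ioc r s, ENNReal.ofReal (h t)).toReal
        ≤ (2 * I).toReal := ENNReal.toReal_mono (ENNReal.mul_ne_top (by norm_num) hIf) hle2
      _ = 2 * I.toReal := by rw [ENNReal.toReal_mul]; norm_num
  have hψs : r ^ α * ψ s ≤ ε := by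
    have h3 : ψ s ≤ ε / r ^ α := le_of_lt hs
    calc r ^ α * ψ s ≤ r ^ α * (ε / r ^ α) := mul_le_mul_of_nonneg_left h3 hrα.le
      _ = ε := by field_simp
  calc r ^ α * ‖f r‖ ^ 2 = r ^ α * ψ r := rfl
    _ ≤ r ^ α * ψ s + ∫ t in r..s, h t := key
    _ ≤ ε + 2 * I.toReal := add_le_add hψs hIbound
    _ = 2 * I.toReal + ε := by ring

end StraussAux

section StraussMain
open Set Function Metric MeasureTheory Measure ENNReal Real
open scoped NNReal

/-- Weighted radial Strauss-type inequality in `W_b^{1,2}`: for `n ≥ 1`, `b ≥ 2 - 2n`,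
there is `C = C(n)` such that every radial `u ∈ W_b^{1,2}` satisfies
`sup_x |x|^{(2n-2+b)/4}|u(x)| ≤ C ‖∇u‖_{L²(|x|^b dx)}^{1/2} ‖u‖_{L²}^{1/2}`. -/
theorem weighted_radial_strauss (n : ℕ) (hn : 1 ≤ n) :
    ∃ C > 0, ∀ (b : ℝ), 2 - 2 * (n : ℝ) ≤ b →
      ∀ u : EuclideanSpace ℝ (Fin n) → ℂ,
        Differentiable ℝ u →
        Integrable (fun x => ‖u x‖ ^ 2) →
        Integrable (fun x => ‖x‖ ^ b * ‖fderiv ℝ u x‖ ^ 2) →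
        (∀ x y : EuclideanSpace ℝ (Fin n), ‖x‖ = ‖y‖ → u x = u y) →
        ∀ x : EuclideanSpace ℝ (Fin n),
          ‖x‖ ^ ((2 * (n : ℝ) - 2 + b) / 4) * ‖u x‖ ≤
            C * (∫ y : EuclideanSpace ℝ (Fin n), ‖y‖ ^ b * ‖fderiv ℝ u y‖ ^ 2) ^ ((1:ℝ)/4) *
              (∫ y : EuclideanSpace ℝ (Fin n), ‖u y‖ ^ 2) ^ ((1:ℝ)/4) := by
  have hn' : (1:ℝ) ≤ (n:ℝ) := by exact_mod_cast hn
  set v : EuclideanSpace ℝ (Fin n) := EuclideanSpace.single (⟨0, hn⟩ : Fin n) (1:ℝ) with hvdef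
  have hv : ‖v‖ = 1 := by simp [hvdef, EuclideanSpace.norm_single]
  haveI : Nontrivial (EuclideanSpace ℝ (Fin n)) :=
    nontrivial_of_ne v 0 (by intro h; rw [h] at hv; simp at hv)
  have hdim : Module.finrank ℝ (EuclideanSpace ℝ (Fin n)) = n := finrank_euclideanSpace_fin
  set ωe : ℝ≥0∞ := (n : ℝ≥0∞) * volume (ball (0 : EuclideanSpace ℝ (Fin n)) 1) with hωedef
  have hωe0 : ωe ≠ 0 := by
    refine mul_ne_zero ?_ (measure_ball_pos _ _ one_pos).ne'
    exact_mod_cast (Nat.pos_of_ne_zero (by omega)).ne'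
  have hωeT : ωe ≠ ⊤ := ENNReal.mul_ne_top (ENNReal.natCast_ne_top n) measure_ball_lt_top.ne
  set ω : ℝ := ωe.toReal with hωdef
  have hω : 0 < ω := ENNReal.toReal_pos hωe0 hωeT
  refine ⟨Real.sqrt (2 / ω), Real.sqrt_pos.mpr (by positivity), ?_⟩
  intro b hb u hu hI2 hI1 hrad x
  set α : ℝ := (2 * (n:ℝ) - 2 + b) / 2 with hαdef
  have hα : 0 ≤ α := by rw [hαdef]; linarith
  set c : ℝ := ((n:ℝ) - 1) + b with hcdef
  set c' : ℝ := (n:ℝ) - 1 with hc'def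
  have hc' : 0 ≤ c' := by rw [hc'def]; linarith
  set f : ℝ → ℂ := fun t => u (t • v) with hfdef
  set f' : ℝ → ℂ := fun t => fderiv ℝ u (t • v) v with hf'def
  set G : ℝ → ℝ := fun t => ‖fderiv ℝ u (t • v)‖ with hGdef
  have hfd : ∀ t, HasDerivAt f (f' t) t := by
    intro t
    have h1 : HasDerivAt (fun t : ℝ => t • v) v t := by
      simpa using (hasDerivAt_id t).smul_const v
    exact (hu (t • v)).hasFDerivAt.comp_hasDerivAt t h1
  have hf'm : Measurable f' :=
    ((measurable_fderiv_apply_const ℝ u v).comp (continuous_id.smul continuous_const).measurable)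
  have hG0 : ∀ t, 0 ≤ G t := fun t => norm_nonneg _
  have hGm : Measurable G :=
    ((measurable_fderiv ℝ u).norm).comp (continuous_id.smul continuous_const).measurable
  have hbd : ∀ t, ‖f' t‖ ≤ G t := by
    intro t
    calc ‖f' t‖ ≤ ‖fderiv ℝ u (t • v)‖ * ‖v‖ := (fderiv ℝ u (t • v)).le_opNorm v
      _ = G t := by rw [hv, mul_one]
  -- radial representations
  have hnorm_smul : ∀ y : EuclideanSpace ℝ (Fin n), ‖y‖ = ‖(‖y‖ : ℝ) • v‖ := by
    intro y
    rw [norm_smul, hv, mul_one, Real.norm_eq_abs, abs_of_nonneg (norm_nonneg y)]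
  have hufr : ∀ y : EuclideanSpace ℝ (Fin n), u y = f ‖y‖ := fun y =>
    hrad y (‖y‖ • v) (hnorm_smul y)
  have hgfr : ∀ y : EuclideanSpace ℝ (Fin n), ‖fderiv ℝ u y‖ = G ‖y‖ := fun y =>
    radial_fderiv_norm hu hrad y (‖y‖ • v) (hnorm_smul y)
  -- the 1-D lintegrals
  set L1 : ℝ≥0∞ := ∫⁻ t in Ioi (0:ℝ), ENNReal.ofReal (t ^ c * G t ^ 2) with hL1def
  set L2 : ℝ≥0∞ := ∫⁻ t in Ioi (0:ℝ), ENNReal.ofReal (t ^ c' * ‖f t‖ ^ 2) with hL2def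
  -- polar coordinates
  have hpolar1 : ∫⁻ y : EuclideanSpace ℝ (Fin n),
      ENNReal.ofReal (‖y‖ ^ b * ‖fderiv ℝ u y‖ ^ 2) = ωe * L1 := by
    have hFm : Measurable (fun t : ℝ => ENNReal.ofReal (t ^ b * G t ^ 2)) :=
      ((measurable_id'.pow_const b).mul (hGm.pow_const 2)).ennreal_ofReal
    have hst : ∀ y : EuclideanSpace ℝ (Fin n),
        ENNReal.ofReal (‖y‖ ^ b * ‖fderiv ℝ u y‖ ^ 2)
          = (fun t => ENNReal.ofReal (t ^ b * G t ^ 2)) ‖y‖ := fun y => by rw [hgfr y]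
    rw [lintegral_congr hst, lintegral_fun_norm_addHaar' volume _ hFm, hdim]
    rw [show ((n : ℝ≥0∞) * volume (ball (0 : EuclideanSpace ℝ (Fin n)) 1)
      * ∫⁻ y in Ioi (0:ℝ), ENNReal.ofReal (y ^ (n - 1)) * ENNReal.ofReal (y ^ b * G y ^ 2))
      = ωe * ∫⁻ y in Ioi (0:ℝ), ENNReal.ofReal (y ^ (n - 1)) * ENNReal.ofReal (y ^ b * G y ^ 2)
      from rfl]
    congr 1
    refine setLIntegral_congr_fun measurableSet_Ioi ?_
    intro t ht
    have ht0 : (0:ℝ) < t := ht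
    beta_reduce
    rw [← ENNReal.ofReal_mul (pow_nonneg ht0.le _)]
    congr 1
    rw [← Real.rpow_natCast t (n - 1), ← mul_assoc, ← Real.rpow_add ht0]
    congr 2
    rw [hcdef]
    push_cast [Nat.cast_sub hn]
    ring
  have hfc : Continuous f := by
    rw [continuous_iff_continuousAt]; exact fun t => (hfd t).continuousAt
  have hpolar2 : ∫⁻ y : EuclideanSpace ℝ (Fin n), ENNReal.ofReal (‖u y‖ ^ 2) = ωe * L2 := by
    have hFm : Measurable (fun t : ℝ => ENNReal.ofReal (‖f t‖ ^ 2)) :=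
      ((hfc.measurable.norm).pow_const 2).ennreal_ofReal
    have hst : ∀ y : EuclideanSpace ℝ (Fin n),
        ENNReal.ofReal (‖u y‖ ^ 2) = (fun t => ENNReal.ofReal (‖f t‖ ^ 2)) ‖y‖ := fun y => by
      rw [hufr y]
    rw [lintegral_congr hst, lintegral_fun_norm_addHaar' volume _ hFm, hdim]
    rw [show ((n : ℝ≥0∞) * volume (ball (0 : EuclideanSpace ℝ (Fin n)) 1)
      * ∫⁻ y in Ioi (0:ℝ), ENNReal.ofReal (y ^ (n - 1)) * ENNReal.ofReal (‖f y‖ ^ 2))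
      = ωe * ∫⁻ y in Ioi (0:ℝ), ENNReal.ofReal (y ^ (n - 1)) * ENNReal.ofReal (‖f y‖ ^ 2)
      from rfl]
    congr 1
    refine setLIntegral_congr_fun measurableSet_Ioi ?_
    intro t ht
    have ht0 : (0:ℝ) < t := ht
    beta_reduce
    rw [← ENNReal.ofReal_mul (pow_nonneg ht0.le _)]
    congr 2
    rw [← Real.rpow_natCast t (n - 1), hc'def]
    congr 1
    push_cast [Nat.cast_sub hn]
    ring
  -- finiteness and values
  have hnn1 : ∀ y : EuclideanSpace ℝ (Fin n), 0 ≤ ‖y‖ ^ b * ‖fderiv ℝ u y‖ ^ 2 :=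
    fun y => mul_nonneg (Real.rpow_nonneg (norm_nonneg y) b) (sq_nonneg _)
  have hnn2 : ∀ y : EuclideanSpace ℝ (Fin n), (0:ℝ) ≤ ‖u y‖ ^ 2 := fun y => sq_nonneg _
  have hAfin : ωe * L1 ≠ ⊤ := by
    rw [← hpolar1]
    have h1 := hI1.hasFiniteIntegral
    rw [hasFiniteIntegral_iff_ofReal (Filter.Eventually.of_forall hnn1)] at h1
    exact h1.ne
  have hL1T : L1 ≠ ⊤ := by
    intro hT; rw [hT, ENNReal.mul_top hωe0] at hAfin; exact hAfin rfl
  have hBfin : ωe * L2 ≠ ⊤ := by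
    rw [← hpolar2]
    have h1 := hI2.hasFiniteIntegral
    rw [hasFiniteIntegral_iff_ofReal (Filter.Eventually.of_forall hnn2)] at h1
    exact h1.ne
  have hL2T : L2 ≠ ⊤ := by
    intro hT; rw [hT, ENNReal.mul_top hωe0] at hBfin; exact hBfin rfl
  have hAeq : ∫ y : EuclideanSpace ℝ (Fin n), ‖y‖ ^ b * ‖fderiv ℝ u y‖ ^ 2
      = ω * L1.toReal := by
    rw [integral_eq_lintegral_of_nonneg_ae (Filter.Eventually.of_forall hnn1)
      hI1.aestronglyMeasurable, hpolar1, ENNReal.toReal_mul]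
  have hBeq : ∫ y : EuclideanSpace ℝ (Fin n), ‖u y‖ ^ 2 = ω * L2.toReal := by
    rw [integral_eq_lintegral_of_nonneg_ae (Filter.Eventually.of_forall hnn2)
      hI2.aestronglyMeasurable, hpolar2, ENNReal.toReal_mul]
  -- apply the core lemma
  have hcc' : c + c' = 2 * α := by rw [hcdef, hc'def, hαdef]; ring
  have hK := strauss_core hα hc' hcc' hfd hf'm hG0 hGm hbd hL1def.symm hL1T hL2def.symm hL2T
  set K : ℝ := 2 * (L1 ^ ((1:ℝ)/2) * L2 ^ ((1:ℝ)/2)).toReal with hKdef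
  have hK0 : 0 ≤ K := mul_nonneg (by norm_num) ENNReal.toReal_nonneg
  -- squared inequality
  have hsq : (‖x‖ ^ ((2 * (n:ℝ) - 2 + b) / 4) * ‖u x‖) ^ 2 ≤ K := by
    rcases eq_or_lt_of_le (norm_nonneg x) with h0 | h0
    · have hxn : ‖x‖ = 0 := h0.symm
      rcases eq_or_lt_of_le hb with hbe | hbl
      · have hα0 : α = 0 := by rw [hαdef, ← hbe]; ring
        have he0 : (2 * (n:ℝ) - 2 + b) / 4 = 0 := by rw [← hbe]; ring
        rw [hxn, he0, Real.rpow_zero, one_mul, hufr x, hxn]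
        have hlim : Filter.Tendsto (fun r : ℝ => r ^ α * ‖f r‖ ^ 2)
            (nhdsWithin 0 (Ioi 0)) (nhds (‖f 0‖ ^ 2)) := by
          simp only [hα0, Real.rpow_zero, one_mul]
          exact ((hfc.norm.pow 2).tendsto 0).mono_left nhdsWithin_le_nhds
        refine le_of_tendsto hlim ?_
        filter_upwards [self_mem_nhdsWithin] with r hr
        exact hK r hr
      · have hepos : 0 < (2 * (n:ℝ) - 2 + b) / 4 := by linarith
        rw [hxn, Real.zero_rpow hepos.ne', zero_mul]
        simpa using hK0
    · have hxα : (‖x‖ ^ ((2 * (n:ℝ) - 2 + b) / 4)) ^ 2 = ‖x‖ ^ α := by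
        rw [← Real.rpow_natCast (‖x‖ ^ ((2 * (n:ℝ) - 2 + b) / 4)) 2,
          ← Real.rpow_mul (norm_nonneg x), hαdef]
        congr 1
        push_cast
        ring
      calc (‖x‖ ^ ((2 * (n:ℝ) - 2 + b) / 4) * ‖u x‖) ^ 2
          = (‖x‖ ^ ((2 * (n:ℝ) - 2 + b) / 4)) ^ 2 * ‖u x‖ ^ 2 := mul_pow _ _ _
        _ = ‖x‖ ^ α * ‖f ‖x‖‖ ^ 2 := by rw [hxα, hufr x]
        _ ≤ K := hK ‖x‖ h0
  -- identify the squared right-hand side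
  have hA0 : (0:ℝ) ≤ ∫ y : EuclideanSpace ℝ (Fin n), ‖y‖ ^ b * ‖fderiv ℝ u y‖ ^ 2 := by
    rw [hAeq]; exact mul_nonneg hω.le ENNReal.toReal_nonneg
  have hB0 : (0:ℝ) ≤ ∫ y : EuclideanSpace ℝ (Fin n), ‖u y‖ ^ 2 := by
    rw [hBeq]; exact mul_nonneg hω.le ENNReal.toReal_nonneg
  have hωh : ω ^ ((1:ℝ)/2) * ω ^ ((1:ℝ)/2) = ω := by
    rw [← Real.rpow_add hω]; norm_num
  have hRHS : (Real.sqrt (2 / ω)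
      * (∫ y : EuclideanSpace ℝ (Fin n), ‖y‖ ^ b * ‖fderiv ℝ u y‖ ^ 2) ^ ((1:ℝ)/4)
      * (∫ y : EuclideanSpace ℝ (Fin n), ‖u y‖ ^ 2) ^ ((1:ℝ)/4)) ^ 2 = K := by
    rw [mul_pow, mul_pow, Real.sq_sqrt (by positivity), hAeq, hBeq,
      ← Real.rpow_natCast ((ω * L1.toReal) ^ ((1:ℝ)/4)) 2,
      ← Real.rpow_mul (mul_nonneg hω.le ENNReal.toReal_nonneg),
      ← Real.rpow_natCast ((ω * L2.toReal) ^ ((1:ℝ)/4)) 2,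
      ← Real.rpow_mul (mul_nonneg hω.le ENNReal.toReal_nonneg)]
    norm_num
    rw [Real.mul_rpow hω.le ENNReal.toReal_nonneg, Real.mul_rpow hω.le ENNReal.toReal_nonneg]
    have hr1 : 2 / ω * (ω ^ ((1:ℝ)/2) * L1.toReal ^ ((1:ℝ)/2))
        * (ω ^ ((1:ℝ)/2) * L2.toReal ^ ((1:ℝ)/2))
        = (ω ^ ((1:ℝ)/2) * ω ^ ((1:ℝ)/2) / ω)
          * (2 * (L1.toReal ^ ((1:ℝ)/2) * L2.toReal ^ ((1:ℝ)/2))) := by ring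
    rw [hr1, hωh, div_self hω.ne', one_mul, hKdef,
      ENNReal.toReal_mul, ← ENNReal.toReal_rpow, ← ENNReal.toReal_rpow]
  -- conclude
  have hL : 0 ≤ ‖x‖ ^ ((2 * (n:ℝ) - 2 + b) / 4) * ‖u x‖ :=
    mul_nonneg (Real.rpow_nonneg (norm_nonneg x) _) (norm_nonneg _)
  have hR : 0 ≤ Real.sqrt (2 / ω)
      * (∫ y : EuclideanSpace ℝ (Fin n), ‖y‖ ^ b * ‖fderiv ℝ u y‖ ^ 2) ^ ((1:ℝ)/4)
      * (∫ y : EuclideanSpace ℝ (Fin n), ‖u y‖ ^ 2) ^ ((1:ℝ)/4) :=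
    mul_nonneg (mul_nonneg (Real.sqrt_nonneg _) (Real.rpow_nonneg hA0 _))
      (Real.rpow_nonneg hB0 _)
  calc ‖x‖ ^ ((2 * (n:ℝ) - 2 + b) / 4) * ‖u x‖
      = Real.sqrt ((‖x‖ ^ ((2 * (n:ℝ) - 2 + b) / 4) * ‖u x‖) ^ 2) := (Real.sqrt_sq hL).symm
    _ ≤ Real.sqrt ((Real.sqrt (2 / ω)
        * (∫ y : EuclideanSpace ℝ (Fin n), ‖y‖ ^ b * ‖fderiv ℝ u y‖ ^ 2) ^ ((1:ℝ)/4)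
        * (∫ y : EuclideanSpace ℝ (Fin n), ‖u y‖ ^ 2) ^ ((1:ℝ)/4)) ^ 2) :=
        Real.sqrt_le_sqrt (by rw [hRHS]; exact hsq)
    _ = _ := Real.sqrt_sq hR


end StraussMain
end
end

section
/- Let β ∈ (0,1), T* > 0, C₀ > 0, and let f : [0,T*) → [0,∞) be differentiable with f(0) ≤ C₀ and satisfying f(τ) ≤ C₀ (T*-τ)^{2β/(β+1)} - (T*-τ) f'(τ) for all τ ∈ [0,T*). Then there is a constant C₁ (depending on C₀, β, T*) such that f(τ) ≤ C₁ (T*-τ)^{2β/(β+1)} for all τ sufficiently close to T*. -/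
open Real Set

noncomputable section

/-- ODE comparison lemma: if `f ≥ 0` on `[0,T*)`, `f(0) ≤ C₀`, and
`f(τ) ≤ C₀ (T*-τ)^{2β/(β+1)} - (T*-τ) f'(τ)` on `[0,T*)` with `β ∈ (0,1)`, then
`f(τ) ≤ C₁ (T*-τ)^{2β/(β+1)}` for `τ` close enough to `T*`. -/
theorem ode_comparison_blowup_rate (β T C₀ : ℝ) (hβ0 : 0 < β) (hβ1 : β < 1)
    (hT : 0 < T) (hC₀ : 0 < C₀) (f f' : ℝ → ℝ)
    (hderiv : ∀ τ ∈ Ico (0:ℝ) T, HasDerivAt f (f' τ) τ)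
    (hnonneg : ∀ τ ∈ Ico (0:ℝ) T, 0 ≤ f τ)
    (hf0 : f 0 ≤ C₀)
    (hmain : ∀ τ ∈ Ico (0:ℝ) T,
      f τ ≤ C₀ * (T - τ) ^ (2 * β / (β + 1)) - (T - τ) * f' τ) :
    ∃ C₁ > 0, ∃ t₀ ∈ Ico (0:ℝ) T, ∀ τ ∈ Ico t₀ T,
      f τ ≤ C₁ * (T - τ) ^ (2 * β / (β + 1)) := by
  have hβ1' : (0:ℝ) < β + 1 := by linarith
  have h1β : (0:ℝ) < 1 - β := by linarith
  set a : ℝ := (β - 1) / (β + 1) with ha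
  have hexp : 2 * β / (β + 1) = a + 1 := by rw [ha]; field_simp; ring
  have haneg : a < 0 := div_neg_of_neg_of_pos (by linarith) hβ1'
  set K : ℝ := C₀ * (β + 1) / (1 - β) with hK
  have hKpos : 0 < K := div_pos (mul_pos hC₀ hβ1') h1β
  set h : ℝ → ℝ := fun s => f s / (T - s) - K * (T - s) ^ a with hh
  have hders : ∀ s ∈ Ico (0:ℝ) T, HasDerivAt h
      ((f' s * (T - s) + f s) / (T - s) ^ 2 - C₀ * (T - s) ^ (a - 1)) s := by
    intro s hs
    have hTs : 0 < T - s := by rw [mem_Ico] at hs; linarith [hs.2]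
    have hd1 : HasDerivAt (fun x : ℝ => T - x) (-1) s := by
      simpa using (hasDerivAt_id s).const_sub T
    have hd2 : HasDerivAt (fun x => f x / (T - x))
        ((f' s * (T - s) - f s * (-1)) / (T - s) ^ 2) s :=
      (hderiv s hs).div hd1 hTs.ne'
    have hd3 : HasDerivAt (fun x : ℝ => (T - x) ^ a) (-1 * a * (T - s) ^ (a - 1)) s :=
      hd1.rpow_const (Or.inl hTs.ne')
    have hd4 := hd2.sub (hd3.const_mul K)
    have hKa : K * (-1 * a) = C₀ := by
      rw [hK, ha]; field_simp; try ring
    refine hd4.congr_deriv ?_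
    rw [← hKa]; try ring
  have hder_nonpos : ∀ s ∈ Ico (0:ℝ) T,
      (f' s * (T - s) + f s) / (T - s) ^ 2 - C₀ * (T - s) ^ (a - 1) ≤ 0 := by
    intro s hs
    have hTs : 0 < T - s := by rw [mem_Ico] at hs; linarith [hs.2]
    have hm := hmain s hs
    rw [hexp] at hm
    have hnum : f' s * (T - s) + f s ≤ C₀ * (T - s) ^ (a + 1) := by linarith
    have hfac : (T - s) ^ (a + 1) = (T - s) ^ (a - 1) * (T - s) ^ 2 := by
      rw [← rpow_natCast (T - s) 2, ← rpow_add hTs]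
      congr 1
      push_cast; ring
    have h2 : (f' s * (T - s) + f s) / (T - s) ^ 2
        ≤ C₀ * (T - s) ^ (a + 1) / (T - s) ^ 2 := by
      gcongr
    have h3 : C₀ * (T - s) ^ (a + 1) / (T - s) ^ 2 = C₀ * (T - s) ^ (a - 1) := by
      rw [hfac]
      field_simp
    linarith [h3 ▸ h2]
  have key : ∀ τ ∈ Ico (0:ℝ) T, h τ ≤ h 0 := by
    intro τ hτ
    rw [mem_Ico] at hτ
    have hsub : Icc (0:ℝ) τ ⊆ Ico 0 T := fun x hx => ⟨hx.1, lt_of_le_of_lt hx.2 hτ.2⟩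
    have hcont : ContinuousOn h (Icc 0 τ) := fun x hx =>
      ((hders x (hsub hx)).continuousAt).continuousWithinAt
    have hanti : AntitoneOn h (Icc 0 τ) := by
      apply antitoneOn_of_deriv_nonpos (convex_Icc 0 τ) hcont
      · intro x hx
        rw [interior_Icc] at hx
        exact ((hders x (hsub (Ioo_subset_Icc_self hx))).differentiableAt).differentiableWithinAt
      · intro x hx
        rw [interior_Icc] at hx
        rw [(hders x (hsub (Ioo_subset_Icc_self hx))).deriv]
        exact hder_nonpos x (hsub (Ioo_subset_Icc_self hx))
    exact hanti (left_mem_Icc.mpr hτ.1) (right_mem_Icc.mpr hτ.1) hτ.1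
  refine ⟨C₀ * T ^ (-a) / T + K, by positivity, 0, ⟨le_refl 0, hT⟩, ?_⟩
  intro τ hτ
  have hτ' : τ ∈ Ico (0:ℝ) T := hτ
  rw [mem_Ico] at hτ'
  have hTτ : 0 < T - τ := by linarith [hτ'.2]
  have hkey := key τ hτ
  have h0le : h 0 ≤ C₀ / T := by
    simp only [hh, sub_zero]
    have h1 : 0 ≤ K * T ^ a := by positivity
    have h2 : f 0 / T ≤ C₀ / T := by gcongr
    linarith
  have hg : f τ / (T - τ) ≤ C₀ / T + K * (T - τ) ^ a := by
    simp only [hh] at hkey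
    linarith
  have hf : f τ ≤ (C₀ / T) * (T - τ) + K * (T - τ) ^ (a + 1) := by
    have hmul := mul_le_mul_of_nonneg_right hg hTτ.le
    rw [div_mul_cancel₀ _ hTτ.ne'] at hmul
    calc f τ ≤ (C₀ / T + K * (T - τ) ^ a) * (T - τ) := hmul
      _ = (C₀ / T) * (T - τ) + K * (T - τ) ^ (a + 1) := by
          rw [rpow_add_one hTτ.ne']; ring
  have hbound : (T - τ) ≤ T ^ (-a) * (T - τ) ^ (a + 1) := by
    have h1 : (T - τ) ^ (-a) ≤ T ^ (-a) :=
      rpow_le_rpow hTτ.le (by linarith [hτ'.1]) (by linarith)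
    calc (T - τ) = (T - τ) ^ (-a) * (T - τ) ^ (a + 1) := by
          rw [← rpow_add hTτ, show -a + (a + 1) = (1:ℝ) by ring, rpow_one]
      _ ≤ T ^ (-a) * (T - τ) ^ (a + 1) :=
          mul_le_mul_of_nonneg_right h1 (rpow_nonneg hTτ.le _)
  rw [hexp]
  have hCT : (0:ℝ) ≤ C₀ / T := by positivity
  have h5 := mul_le_mul_of_nonneg_left hbound hCT
  calc f τ ≤ (C₀ / T) * (T - τ) + K * (T - τ) ^ (a + 1) := hf
    _ ≤ (C₀ / T) * (T ^ (-a) * (T - τ) ^ (a + 1)) + K * (T - τ) ^ (a + 1) := by linarith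
    _ = (C₀ * T ^ (-a) / T + K) * (T - τ) ^ (a + 1) := by ring
end
end
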